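/- On R, let w1(x) = |x|^{-α} with 1 < α < 1 + p1/p2 and w2(x) = 1, where p1, p2 ∈ (1,∞) and 1/p = 1/p1 + 1/p2 with p > 1. Then w1 is not locally integrable on R (hence w1 is not in any Muckenhoupt class A_q), but ν_w(x) = |x|^{-αp/p1} is an A_1 weight on R. -/

import Mathlib

open MeasureTheory Set Filter

noncomputable section

/-- A (closed axis-parallel) cube in `ℝⁿ`. -/
def IsCube {n : ℕ} (Q : Set (Fin n → ℝ)) : Prop :=
  ∃ (c : Fin n → ℝ) (h : ℝ), 0 < h ∧ Q = Set.Icc c (fun i => c i + h)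

/-- The average of `f` over `Q`. -/
def avg {n : ℕ} (Q : Set (Fin n → ℝ)) (f : (Fin n → ℝ) → ℝ) : ℝ :=
  (MeasureTheory.volume Q).toReal⁻¹ * ∫ x in Q, f x

/-- The `A_p` ratio of the weight `w` on the cube `Q`. -/
def apRatio {n : ℕ} (p : ℝ) (w : (Fin n → ℝ) → ℝ) (Q : Set (Fin n → ℝ)) : ℝ :=
  avg Q w * (avg Q (fun x => w x ^ (1 - p / (p - 1)))) ^ (p - 1)

/-- The Muckenhoupt `A_p` constant of `w`. -/
def apConst {n : ℕ} (p : ℝ) (w : (Fin n → ℝ) → ℝ) : ℝ :=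
  sSup {r : ℝ | ∃ Q, IsCube Q ∧ r = apRatio p w Q}

/-- `w` is a Muckenhoupt `A_p` weight on `ℝⁿ`. -/
def IsAp {n : ℕ} (p : ℝ) (w : (Fin n → ℝ) → ℝ) : Prop :=
  (∀ x, 0 ≤ w x) ∧ MeasureTheory.LocallyIntegrable w MeasureTheory.volume ∧
    BddAbove {r : ℝ | ∃ Q, IsCube Q ∧ r = apRatio p w Q}

/-- Average of an `ℝ≥0∞`-valued function over a set. -/
def avgE {n : ℕ} (Q : Set (Fin n → ℝ)) (f : (Fin n → ℝ) → ENNReal) : ENNReal :=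
  (∫⁻ x in Q, f x) / MeasureTheory.volume Q

/-- The bilinear maximal function `M(f,g)(x) = sup_{Q ∋ x} (⨍_Q |f|)(⨍_Q |g|)`. -/
def bmaxFn {n : ℕ} (f g : (Fin n → ℝ) → ℝ) (x : Fin n → ℝ) : ENNReal :=
  ⨆ (Q : Set (Fin n → ℝ)) (_ : IsCube Q ∧ x ∈ Q),
    avgE Q (fun y => ENNReal.ofReal |f y|) * avgE Q (fun z => ENNReal.ofReal |g z|)

/-- An interval (one-dimensional cube) in `ℝ`. -/
def IsCubeR (Q : Set ℝ) : Prop := ∃ a h : ℝ, 0 < h ∧ Q = Set.Icc a (a + h)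

/-- Average over a subset of `ℝ`. -/
def avgR (Q : Set ℝ) (f : ℝ → ℝ) : ℝ :=
  (MeasureTheory.volume Q).toReal⁻¹ * ∫ x in Q, f x

/-- The `A_p` ratio on an interval. -/
def apRatioR (p : ℝ) (w : ℝ → ℝ) (Q : Set ℝ) : ℝ :=
  avgR Q w * (avgR Q (fun x => w x ^ (1 - p / (p - 1)))) ^ (p - 1)

/-- `w` is a Muckenhoupt `A_p` weight on `ℝ`. -/
def IsApR (p : ℝ) (w : ℝ → ℝ) : Prop :=
  (∀ x, 0 ≤ w x) ∧ MeasureTheory.LocallyIntegrable w MeasureTheory.volume ∧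
    BddAbove {r : ℝ | ∃ Q, IsCubeR Q ∧ r = apRatioR p w Q}

/-- `w` is an `A_1` weight on `ℝ`: the average over any interval is dominated by `C w`
a.e. on that interval. -/
def IsA1R (w : ℝ → ℝ) : Prop :=
  (∀ x, 0 ≤ w x) ∧ MeasureTheory.LocallyIntegrable w MeasureTheory.volume ∧
    ∃ C : ℝ, ∀ a h : ℝ, 0 < h → ∀ᵐ x ∂MeasureTheory.volume,
      x ∈ Set.Icc a (a + h) → h⁻¹ * ∫ t in Set.Icc a (a + h), w t ≤ C * w x


section AuxStmt6
open intervalIntegral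

lemma abs_rpow_intervalIntegrable (a b r : ℝ) (h : -1 < r) :
    IntervalIntegrable (fun x : ℝ => |x| ^ r) volume a b := by
  suffices H : ∀ c : ℝ, 0 ≤ c → IntervalIntegrable (fun x : ℝ => |x| ^ r) volume 0 c by
    have key : ∀ c : ℝ, IntervalIntegrable (fun x : ℝ => |x| ^ r) volume 0 c := by
      intro c
      rcases le_total 0 c with hc | hc
      · exact H c hc
      · rw [IntervalIntegrable.iff_comp_neg]
        simpa using H (-c) (by linarith)
    exact (key a).symm.trans (key b)
  intro c hc
  refine (intervalIntegrable_rpow' h (a := 0) (b := c)).congr_ae ?_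
  rw [EventuallyEq, ae_restrict_iff' measurableSet_uIoc]
  filter_upwards with x hx
  rw [uIoc_of_le hc] at hx
  rw [abs_of_pos hx.1]

lemma abs_rpow_integral_Icc (M r : ℝ) (h : -1 < r) (hM : 0 ≤ M) :
    ∫ t in Icc (-M) M, |t| ^ r = 2 * M ^ (r+1) / (r+1) := by
  rw [MeasureTheory.integral_Icc_eq_integral_Ioc, ← intervalIntegral.integral_of_le (by linarith)]
  have h1 : ∫ x in (0:ℝ)..M, |x| ^ r = M ^ (r+1) / (r+1) := by
    rw [intervalIntegral.integral_congr (g := fun x => x ^ r) ?_, integral_rpow (Or.inl h)]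
    · rw [Real.zero_rpow (by linarith)]; ring
    · intro x hx
      rw [uIcc_of_le hM] at hx
      simp [abs_of_nonneg hx.1]
  have h2 : ∫ x in (-M)..(0:ℝ), |x| ^ r = M ^ (r+1) / (r+1) := by
    have := intervalIntegral.integral_comp_neg (a := 0) (b := M) (fun x : ℝ => |x| ^ r)
    simp only [abs_neg, neg_zero] at this
    rw [← h1]; exact this.symm
  rw [← intervalIntegral.integral_add_adjacent_intervals (b := 0)
    (abs_rpow_intervalIntegrable _ _ _ h) (abs_rpow_intervalIntegrable _ _ _ h), h1, h2]
  ring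

-- main integral bound
lemma key_bound (β a h : ℝ) (hβ0 : 0 < β) (hβ1 : β < 1) (hh : 0 < h) :
    ∫ t in Icc a (a+h), |t| ^ (-β) ≤ (4 / (1 - β)) * h * (max |a| |a+h|) ^ (-β) := by
  set M := max |a| |a+h| with hMdef
  have hMa : |a| ≤ M := le_max_left _ _
  have hMb : |a+h| ≤ M := le_max_right _ _
  have hhM : h ≤ 2 * M := by
    have : h = (a+h) - a := by ring
    calc h = (a+h) - a := by ring
    _ ≤ |a+h| + |a| := by
        have := abs_sub_abs_le_abs_sub (a+h) a
        have h1 := le_abs_self ((a+h) - a)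
        have := abs_sub (a+h) a
        calc (a+h) - a ≤ |(a+h) - a| := le_abs_self _
        _ ≤ |a+h| + |a| := abs_sub _ _
    _ ≤ 2 * M := by linarith
  have hM0 : 0 < M := by nlinarith
  have hr : (-1 : ℝ) < -β := by linarith
  have hInt : IntegrableOn (fun t : ℝ => |t| ^ (-β)) (Icc (-M) M) volume := by
    have := abs_rpow_intervalIntegrable (-M) M (-β) hr
    rw [intervalIntegrable_iff_integrableOn_Icc_of_le (by linarith)] at this
    exact this
  have hsub : Icc a (a+h) ⊆ Icc (-M) M := by
    intro t ht
    constructor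
    · have := neg_abs_le a; linarith [ht.1]
    · have := le_abs_self (a+h); linarith [ht.2]
  have hMpow : M ^ (-β + 1) = M * M ^ (-β) := by
    rw [Real.rpow_add hM0, Real.rpow_one]; ring
  rcases le_or_gt M (2*h) with hcase | hcase
  · -- small interval relative to M
    have step1 : ∫ t in Icc a (a+h), |t| ^ (-β) ≤ ∫ t in Icc (-M) M, |t| ^ (-β) := by
      apply MeasureTheory.setIntegral_mono_set hInt
      · filter_upwards with x using Real.rpow_nonneg (abs_nonneg x) _
      · exact HasSubset.Subset.eventuallyLE hsub
    rw [abs_rpow_integral_Icc M (-β) hr hM0.le] at step1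
    have hpos : (0:ℝ) < M ^ (-β) := Real.rpow_pos_of_pos hM0 _
    have key : 2 * M ^ (-β + 1) / (-β + 1) ≤ 4 * h * M ^ (-β) / (1-β) := by
      rw [hMpow, show -β + 1 = 1 - β by ring]
      apply div_le_div_of_nonneg_right ?_ (by linarith)
      nlinarith
    have : 4 * h * M ^ (-β) / (1-β) = 4 / (1-β) * h * M ^ (-β) := by ring
    linarith
  · -- interval far from 0 : |t| ≥ M - h ≥ M/2
    have hbound : ∀ t ∈ Icc a (a+h), |t| ^ (-β) ≤ 2 * M ^ (-β) := by
      intro t ht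
      have h1 : M - h ≤ |t| := by
        rcases max_cases |a| |a+h| with ⟨hm, _⟩ | ⟨hm, _⟩
        · have : |a| - |t| ≤ |a - t| := abs_sub_abs_le_abs_sub a t
          have habs : |a - t| ≤ h := by
            rw [abs_le]; constructor <;> [linarith [ht.2]; linarith [ht.1]]
          linarith
        · have : |a+h| - |t| ≤ |(a+h) - t| := abs_sub_abs_le_abs_sub (a+h) t
          have habs : |(a+h) - t| ≤ h := by
            rw [abs_le]; constructor <;> [linarith [ht.2]; linarith [ht.1]]
          linarith
      have h2 : M / 2 ≤ |t| := by linarith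
      calc |t| ^ (-β) ≤ (M/2) ^ (-β) :=
            Real.rpow_le_rpow_of_nonpos (by linarith) h2 (by linarith)
      _ = M ^ (-β) * 2 ^ β := by
          rw [Real.div_rpow hM0.le (by norm_num), Real.rpow_neg (by norm_num : (0:ℝ) ≤ 2)]
          field_simp
      _ ≤ M ^ (-β) * 2 := by
          have : (2:ℝ) ^ β ≤ 2 ^ (1:ℝ) :=
            Real.rpow_le_rpow_of_exponent_le (by norm_num) (by linarith)
          rw [Real.rpow_one] at this
          have := Real.rpow_pos_of_pos hM0 (-β)
          nlinarith
      _ = 2 * M ^ (-β) := by ring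
    have hIntI : IntegrableOn (fun t : ℝ => |t| ^ (-β)) (Icc a (a+h)) volume :=
      hInt.mono_set hsub
    have step1 : ∫ t in Icc a (a+h), |t| ^ (-β) ≤ ∫ _t in Icc a (a+h), 2 * M ^ (-β) := by
      apply MeasureTheory.setIntegral_mono_on hIntI (integrableOn_const (by
        rw [Real.volume_Icc]; exact ENNReal.ofReal_ne_top)) measurableSet_Icc hbound
    rw [MeasureTheory.setIntegral_const] at step1
    rw [measureReal_def, Real.volume_Icc] at step1
    have hvol : (ENNReal.ofReal (a + h - a)).toReal = h := by
      rw [ENNReal.toReal_ofReal (by linarith)]; ring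
    rw [hvol] at step1
    have hpos : (0:ℝ) < M ^ (-β) := Real.rpow_pos_of_pos hM0 _
    have : h • (2 * M ^ (-β)) ≤ 4 / (1-β) * h * M ^ (-β) := by
      rw [smul_eq_mul]
      have h4 : (2:ℝ) ≤ 4 / (1-β) := by
        rw [le_div_iff₀ (by linarith)]; nlinarith
      nlinarith [mul_nonneg (mul_nonneg (sub_nonneg.2 h4) hh.le) hpos.le]
    linarith

end AuxStmt6

/-- on `ℝ`, `w1(x) = |x|^{-α}` with `1 < α < 1 + p1/p2` is not locally integrable
(hence in no `A_q` class), while `ν_w(x) = |x|^{-α p/p1}` is an `A_1` weight. -/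
theorem stmt6 (p p1 p2 α : ℝ) (hp1 : 1 < p1) (hp2 : 1 < p2) (hp : 1 < p)
    (hsum : 1 / p = 1 / p1 + 1 / p2) (hα1 : 1 < α) (hα2 : α < 1 + p1 / p2) :
    ¬ MeasureTheory.LocallyIntegrable (fun x : ℝ => |x| ^ (-α)) MeasureTheory.volume ∧
    (∀ q : ℝ, 1 < q → ¬ IsApR q (fun x : ℝ => |x| ^ (-α))) ∧
    IsA1R (fun x : ℝ => |x| ^ (-(α * p / p1))) := by
  have hp1' : (0:ℝ) < p1 := by linarith
  have hp2' : (0:ℝ) < p2 := by linarith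
  have hp' : (0:ℝ) < p := by linarith
  set β := α * p / p1 with hβdef
  have hβ0 : 0 < β := by
    rw [hβdef]; positivity
  have hβ1 : β < 1 := by
    rw [hβdef, div_lt_one hp1']
    field_simp at hsum
    have hα2' : α * p2 < p2 + p1 := by
      have h := mul_lt_mul_of_pos_right hα2 hp2'
      rw [add_mul, one_mul, div_mul_cancel₀ _ (ne_of_gt hp2')] at h
      exact h
    nlinarith [mul_lt_mul_of_pos_right hα2' hp']
  have part1 : ¬ MeasureTheory.LocallyIntegrable (fun x : ℝ => |x| ^ (-α))
      MeasureTheory.volume := by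
    intro hloc
    have h1 : IntegrableOn (fun x : ℝ => |x| ^ (-α)) (Icc 0 1) volume :=
      hloc.integrableOn_isCompact isCompact_Icc
    have h2 : IntegrableOn (fun x : ℝ => x ^ (-α)) (Ioo (0:ℝ) 1) volume := by
      refine (h1.mono_set Ioo_subset_Icc_self).congr_fun ?_ measurableSet_Ioo
      intro x hx
      show |x| ^ (-α) = x ^ (-α)
      rw [abs_of_pos hx.1]
    rw [intervalIntegral.integrableOn_Ioo_rpow_iff one_pos] at h2
    linarith
  refine ⟨part1, fun q hq hAp => part1 hAp.2.1, ?_, ?_, ?_⟩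
  · intro x
    exact Real.rpow_nonneg (abs_nonneg x) _
  · rw [MeasureTheory.locallyIntegrable_iff]
    intro K hK
    obtain ⟨r, hr⟩ := hK.isBounded.subset_closedBall 0
    have hsub : K ⊆ Icc (-(max r 0)) (max r 0) := by
      refine hr.trans ?_
      rw [Real.closedBall_eq_Icc]
      apply Icc_subset_Icc <;> simp [le_max_left]
    refine IntegrableOn.mono_set ?_ hsub
    have := abs_rpow_intervalIntegrable (-(max r 0)) (max r 0) (-β) (by linarith)
    rw [intervalIntegrable_iff_integrableOn_Icc_of_le
      (by simpa using le_max_right r 0 : -(max r 0) ≤ max r 0)] at this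
    exact this
  · refine ⟨4 / (1 - β), fun a h hh => ?_⟩
    have hkey := key_bound β a h hβ0 hβ1 hh
    have h0 : ∀ᵐ (x:ℝ) ∂volume, x ≠ 0 := by
      rw [MeasureTheory.ae_iff]
      simpa using measure_singleton (0:ℝ)
    filter_upwards [h0] with x hx hxI
    set M := max |a| |a+h| with hMdef
    have hxM : |x| ≤ M := by
      rw [abs_le]
      constructor
      · have := neg_abs_le a
        have := le_max_left |a| |a+h|
        linarith [hxI.1]
      · have := le_abs_self (a+h)
        have := le_max_right |a| |a+h|
        linarith [hxI.2]
    have hxpos : 0 < |x| := abs_pos.2 hx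
    have hmono : M ^ (-β) ≤ |x| ^ (-β) :=
      Real.rpow_le_rpow_of_nonpos hxpos hxM (by linarith)
    have hC : (0:ℝ) < 4 / (1 - β) := by
      apply div_pos <;> linarith
    calc h⁻¹ * ∫ t in Icc a (a+h), |t| ^ (-β)
        ≤ h⁻¹ * (4 / (1 - β) * h * M ^ (-β)) := by
          apply mul_le_mul_of_nonneg_left hkey (by positivity)
      _ = 4 / (1 - β) * M ^ (-β) := by
          rw [show h⁻¹ * (4 / (1 - β) * h * M ^ (-β))
              = (h⁻¹ * h) * (4 / (1 - β) * M ^ (-β)) from by ring,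
            inv_mul_cancel₀ hh.ne', one_mul]
      _ ≤ 4 / (1 - β) * |x| ^ (-β) := by
          apply mul_le_mul_of_nonneg_left hmono hC.le
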